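/- Let b > 0 be a real number and let Q : (-b, b) → ℝ be a twice differentiable function satisfying Q''(s) - (s/(b² - s²))·Q'(s) + (1/(b² - s²))·Q(s) = 0 for all s ∈ (-b, b). Then there exist real constants k₁, k₂ such that Q(s) = k₁·s + k₂·√(b² - s²) for all s ∈ (-b, b). -/

import Mathlib

private lemma const_of_hasDerivAt_zero {a b : ℝ} {f : ℝ → ℝ}
    (h : ∀ x ∈ Set.Ioo a b, HasDerivAt f 0 x) {x y : ℝ}
    (hx : x ∈ Set.Ioo a b) (hy : y ∈ Set.Ioo a b) : f x = f y := by
  apply (convex_Ioo a b).is_const_of_fderivWithin_eq_zero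
    (fun z hz => ((h z hz).differentiableAt).differentiableWithinAt) ?_ hx hy
  intro z hz
  rw [fderivWithin_of_isOpen isOpen_Ioo hz]
  have := (h z hz).hasFDerivAt.fderiv
  rw [this]
  ext
  simp

/-- The ODE `Q'' - (s/(b²-s²))Q' + (1/(b²-s²))Q = 0` on `(-b, b)` has general
solution `Q(s) = k₁ s + k₂ √(b² - s²)`. -/
theorem stmt_0 (b : ℝ) (hb : 0 < b) (Q : ℝ → ℝ)
    (hQ1 : ∀ s ∈ Set.Ioo (-b) b, DifferentiableAt ℝ Q s)
    (hQ2 : ∀ s ∈ Set.Ioo (-b) b, DifferentiableAt ℝ (deriv Q) s)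
    (hODE : ∀ s ∈ Set.Ioo (-b) b,
      deriv (deriv Q) s - (s / (b ^ 2 - s ^ 2)) * deriv Q s
        + (1 / (b ^ 2 - s ^ 2)) * Q s = 0) :
    ∃ k₁ k₂ : ℝ, ∀ s ∈ Set.Ioo (-b) b,
      Q s = k₁ * s + k₂ * Real.sqrt (b ^ 2 - s ^ 2) := by
  have h0 : (0:ℝ) ∈ Set.Ioo (-b) b := ⟨by linarith, hb⟩
  have hpos : ∀ s ∈ Set.Ioo (-b) b, 0 < b ^ 2 - s ^ 2 := by
    intro s hs
    obtain ⟨h1, h2⟩ := hs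
    nlinarith
  have hrpos : ∀ s ∈ Set.Ioo (-b) b, 0 < Real.sqrt (b ^ 2 - s ^ 2) := by
    intro s hs; exact Real.sqrt_pos.mpr (hpos s hs)
  have hrsq : ∀ s ∈ Set.Ioo (-b) b,
      Real.sqrt (b ^ 2 - s ^ 2) ^ 2 = b ^ 2 - s ^ 2 := by
    intro s hs; exact Real.sq_sqrt (hpos s hs).le
  -- the ODE in polynomial form: Q''·(b²-s²) = s·Q' - Q
  have hODE' : ∀ s ∈ Set.Ioo (-b) b,
      deriv (deriv Q) s * (b ^ 2 - s ^ 2) = s * deriv Q s - Q s := by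
    intro s hs
    have h := hODE s hs
    have hne := (hpos s hs).ne'
    field_simp at h
    nlinarith [h]
  set A : ℝ → ℝ := fun s => (deriv Q s * (b ^ 2 - s ^ 2) + s * Q s) / b ^ 2 with hA
  set B : ℝ → ℝ :=
    fun s => (Q s - s * deriv Q s) * Real.sqrt (b ^ 2 - s ^ 2) / b ^ 2 with hB
  have hb2 : (b:ℝ) ^ 2 ≠ 0 := by positivity
  -- derivative of the sqrt part
  have hr' : ∀ s ∈ Set.Ioo (-b) b,
      HasDerivAt (fun s => Real.sqrt (b ^ 2 - s ^ 2))
        (-s / Real.sqrt (b ^ 2 - s ^ 2)) s := by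
    intro s hs
    have hinner : HasDerivAt (fun s : ℝ => b ^ 2 - s ^ 2) (-(2 * s)) s := by
      have : HasDerivAt (fun s : ℝ => s ^ 2) (2 * s) s := by
        simpa using (hasDerivAt_pow 2 s)
      exact ((hasDerivAt_const s (b ^ 2)).sub this).congr_deriv (by ring)
    have hne : b ^ 2 - s ^ 2 ≠ 0 := (hpos s hs).ne'
    have := (Real.hasDerivAt_sqrt hne).comp s hinner
    refine this.congr_deriv ?_
    have hrne := (hrpos s hs).ne'
    field_simp
  have hAder : ∀ s ∈ Set.Ioo (-b) b, HasDerivAt A 0 s := by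
    intro s hs
    have h1 := (hQ1 s hs).hasDerivAt
    have h2 := (hQ2 s hs).hasDerivAt
    have hinner : HasDerivAt (fun s : ℝ => b ^ 2 - s ^ 2) (-(2 * s)) s := by
      have : HasDerivAt (fun s : ℝ => s ^ 2) (2 * s) s := by
        simpa using (hasDerivAt_pow 2 s)
      exact ((hasDerivAt_const s (b ^ 2)).sub this).congr_deriv (by ring)
    have hd : HasDerivAt A
        ((deriv (deriv Q) s * (b ^ 2 - s ^ 2) + deriv Q s * (-(2 * s))
          + (1 * Q s + s * deriv Q s)) / b ^ 2) s := by
      exact (((h2.mul hinner).add ((hasDerivAt_id s).mul h1)).div_const _)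
    convert hd using 1
    rw [hODE' s hs]
    field_simp
    ring
  have hBder : ∀ s ∈ Set.Ioo (-b) b, HasDerivAt B 0 s := by
    intro s hs
    have h1 := (hQ1 s hs).hasDerivAt
    have h2 := (hQ2 s hs).hasDerivAt
    have hrs := hr' s hs
    have hd : HasDerivAt B
        (((deriv Q s - (1 * deriv Q s + s * deriv (deriv Q) s))
            * Real.sqrt (b ^ 2 - s ^ 2)
          + (Q s - s * deriv Q s) * (-s / Real.sqrt (b ^ 2 - s ^ 2))) / b ^ 2) s := by
      exact (((h1.sub ((hasDerivAt_id s).mul h2)).mul hrs).div_const _)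
    convert hd using 1
    have hrne := (hrpos s hs).ne'
    have hsq := hrsq s hs
    have hode := hODE' s hs
    have hrr : Real.sqrt (b ^ 2 - s ^ 2) * Real.sqrt (b ^ 2 - s ^ 2)
        = b ^ 2 - s ^ 2 := Real.mul_self_sqrt (hpos s hs).le
    field_simp
    linear_combination s * hode + s * deriv (deriv Q) s * hsq
  refine ⟨A 0, B 0, ?_⟩
  intro s hs
  have hAc : A s = A 0 := const_of_hasDerivAt_zero hAder hs h0
  have hBc : B s = B 0 := const_of_hasDerivAt_zero hBder hs h0
  rw [← hAc, ← hBc, hA, hB]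
  have hsq := hrsq s hs
  have hrr : Real.sqrt (b ^ 2 - s ^ 2) * Real.sqrt (b ^ 2 - s ^ 2)
      = b ^ 2 - s ^ 2 := Real.mul_self_sqrt (hpos s hs).le
  field_simp
  linear_combination (s * deriv Q s - Q s) * hsq
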